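/- Let r ≥ 1, σ ≥ 1, δ ≥ 0. Then there exists a constant C_r > 0 (depending only on r and σ) such that for all real ξ, η: |(1+ξ^2)^{r/2} e^{δ(1+ξ^2)^{1/(2σ)}} - (1+η^2)^{r/2} e^{δ(1+η^2)^{1/(2σ)}}| ≤ C_r |ξ-η| { (1+|ξ-η|^2)^{(r-1)/2} + (1+|η|^2)^{(r-1)/2} + δ[ (1+|ξ-η|^2)^{(r-1)/2 + 1/(2σ)} + (1+|η|^2)^{(r-1)/2 + 1/(2σ)} ] e^{δ(1+|ξ-η|^2)^{1/(2σ)}} e^{δ(1+|η|^2)^{1/(2σ)}} }. -/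

import Mathlib

open Real Set
open scoped NNReal

private lemma rpow_subadd {a b p : ℝ} (ha : 0 ≤ a) (hb : 0 ≤ b)
    (hp : 0 ≤ p) (hp1 : p ≤ 1) : (a + b) ^ p ≤ a ^ p + b ^ p := by
  have h := NNReal.rpow_add_le_add_rpow a.toNNReal b.toNNReal hp hp1
  have h2 := NNReal.coe_le_coe.mpr h
  push_cast at h2
  rwa [Real.coe_toNNReal a ha, Real.coe_toNNReal b hb] at h2

private lemma sqrt_peetre (a b : ℝ) :
    Real.sqrt (1 + (a + b) ^ 2) ≤ Real.sqrt (1 + a ^ 2) + Real.sqrt (1 + b ^ 2) := by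
  set x := Real.sqrt (1 + a ^ 2) with hxdef
  set y := Real.sqrt (1 + b ^ 2) with hydef
  have hx0 : 0 ≤ x := Real.sqrt_nonneg _
  have hy0 : 0 ≤ y := Real.sqrt_nonneg _
  have hxs : x ^ 2 = 1 + a ^ 2 := Real.sq_sqrt (by positivity)
  have hys : y ^ 2 = 1 + b ^ 2 := Real.sq_sqrt (by positivity)
  have hxy : 1 + a * b ≤ x * y := by
    rcases le_or_gt (1 + a * b) 0 with h | h
    · exact h.trans (by positivity)
    · nlinarith [sq_nonneg (a - b), sq_nonneg (x * y - (1 + a * b)), mul_nonneg hx0 hy0]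
  have h1 : 1 + (a + b) ^ 2 ≤ (x + y) ^ 2 := by nlinarith
  calc Real.sqrt (1 + (a + b) ^ 2) ≤ Real.sqrt ((x + y) ^ 2) := Real.sqrt_le_sqrt h1
    _ = x + y := Real.sqrt_sq (by positivity)

private lemma one_add_sq_rpow (c s : ℝ) :
    (1 + c ^ 2) ^ s = Real.sqrt (1 + c ^ 2) ^ (2 * s) := by
  rw [Real.sqrt_eq_rpow, ← Real.rpow_mul (by positivity)]
  congr 1; ring

private lemma peetre_split {s : ℝ} (hs : 0 ≤ s) (a b : ℝ) :
    (1 + (a + b) ^ 2) ^ s ≤ 2 ^ (2 * s) * ((1 + a ^ 2) ^ s + (1 + b ^ 2) ^ s) := by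
  have hs2 : (0:ℝ) ≤ 2 * s := by linarith
  rw [one_add_sq_rpow, one_add_sq_rpow, one_add_sq_rpow]
  set x := Real.sqrt (1 + a ^ 2) with hxdef
  set y := Real.sqrt (1 + b ^ 2) with hydef
  have hx0 : 0 ≤ x := Real.sqrt_nonneg _
  have hy0 : 0 ≤ y := Real.sqrt_nonneg _
  have h := sqrt_peetre a b
  rcases le_total x y with hxy | hxy
  · calc Real.sqrt (1 + (a + b) ^ 2) ^ (2 * s) ≤ (2 * y) ^ (2 * s) := by
          apply Real.rpow_le_rpow (Real.sqrt_nonneg _) (by linarith) hs2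
      _ = 2 ^ (2 * s) * y ^ (2 * s) := Real.mul_rpow (by norm_num) hy0
      _ ≤ 2 ^ (2 * s) * (x ^ (2 * s) + y ^ (2 * s)) := by
          have := Real.rpow_nonneg hx0 (2 * s)
          have h2 : (0:ℝ) < 2 ^ (2 * s) := Real.rpow_pos_of_pos two_pos _
          nlinarith
  · calc Real.sqrt (1 + (a + b) ^ 2) ^ (2 * s) ≤ (2 * x) ^ (2 * s) := by
          apply Real.rpow_le_rpow (Real.sqrt_nonneg _) (by linarith) hs2
      _ = 2 ^ (2 * s) * x ^ (2 * s) := Real.mul_rpow (by norm_num) hx0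
      _ ≤ 2 ^ (2 * s) * (x ^ (2 * s) + y ^ (2 * s)) := by
          have := Real.rpow_nonneg hy0 (2 * s)
          have h2 : (0:ℝ) < 2 ^ (2 * s) := Real.rpow_pos_of_pos two_pos _
          nlinarith

private lemma peetre_subadd {ρ : ℝ} (hρ0 : 0 ≤ ρ) (hρ1 : 2 * ρ ≤ 1) (a b : ℝ) :
    (1 + (a + b) ^ 2) ^ ρ ≤ (1 + a ^ 2) ^ ρ + (1 + b ^ 2) ^ ρ := by
  rw [one_add_sq_rpow, one_add_sq_rpow, one_add_sq_rpow]
  calc Real.sqrt (1 + (a + b) ^ 2) ^ (2 * ρ)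
      ≤ (Real.sqrt (1 + a ^ 2) + Real.sqrt (1 + b ^ 2)) ^ (2 * ρ) :=
        Real.rpow_le_rpow (Real.sqrt_nonneg _) (sqrt_peetre a b) (by linarith)
    _ ≤ _ := rpow_subadd (Real.sqrt_nonneg _) (Real.sqrt_nonneg _) (by linarith) hρ1

private lemma exp_le_one_add_mul {t : ℝ} (_ht : 0 ≤ t) : Real.exp t ≤ 1 + t * Real.exp t := by
  have h1 : Real.exp (-t) * Real.exp t = 1 := by rw [← Real.exp_add]; simp
  nlinarith [Real.add_one_le_exp (-t), Real.exp_pos t]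

private lemma mono_rpow {s u v : ℝ} (hs : 0 ≤ s) (h : |u| ≤ |v|) :
    (1 + u ^ 2) ^ s ≤ (1 + v ^ 2) ^ s := by
  apply Real.rpow_le_rpow (by positivity) _ hs
  nlinarith [sq_abs u, sq_abs v, abs_nonneg u]

private lemma hasDerivAt_F (r δ ρ : ℝ) (x : ℝ) :
    HasDerivAt (fun y : ℝ => (1 + y ^ 2) ^ (r / 2) * Real.exp (δ * (1 + y ^ 2) ^ ρ))
      (2 * x * (r / 2) * (1 + x ^ 2) ^ (r / 2 - 1) * Real.exp (δ * (1 + x ^ 2) ^ ρ)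
        + (1 + x ^ 2) ^ (r / 2) *
          (Real.exp (δ * (1 + x ^ 2) ^ ρ) * (δ * (2 * x * ρ * (1 + x ^ 2) ^ (ρ - 1))))) x := by
  have hu : HasDerivAt (fun y : ℝ => 1 + y ^ 2) (2 * x) x := by
    simpa using (hasDerivAt_pow 2 x).const_add 1
  have hpos : (0:ℝ) < 1 + x ^ 2 := by positivity
  have hg : HasDerivAt (fun y : ℝ => (1 + y ^ 2) ^ (r / 2))
      (2 * x * (r / 2) * (1 + x ^ 2) ^ (r / 2 - 1)) x := hu.rpow_const (Or.inl hpos.ne')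
  have hi : HasDerivAt (fun y : ℝ => δ * (1 + y ^ 2) ^ ρ)
      (δ * (2 * x * ρ * (1 + x ^ 2) ^ (ρ - 1))) x :=
    (hu.rpow_const (Or.inl hpos.ne')).const_mul δ
  exact hg.mul hi.exp

set_option maxHeartbeats 1000000 in
private lemma key_bound {r δ ρ D η : ℝ} (c : ℝ) (hr : 1 ≤ r) (hδ : 0 ≤ δ)
    (hρ0 : 0 < ρ) (hρ2 : 2 * ρ ≤ 1) (hc : |c - η| ≤ |D|) :
    |2 * c * (r / 2) * (1 + c ^ 2) ^ (r / 2 - 1) * Real.exp (δ * (1 + c ^ 2) ^ ρ)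
        + (1 + c ^ 2) ^ (r / 2) *
          (Real.exp (δ * (1 + c ^ 2) ^ ρ) * (δ * (2 * c * ρ * (1 + c ^ 2) ^ (ρ - 1))))| ≤
      (r + 1) * 2 ^ r * ((1 + D ^ 2) ^ ((r - 1) / 2) + (1 + η ^ 2) ^ ((r - 1) / 2)
        + δ * ((1 + D ^ 2) ^ ((r - 1) / 2 + ρ) + (1 + η ^ 2) ^ ((r - 1) / 2 + ρ))
          * Real.exp (δ * (1 + D ^ 2) ^ ρ) * Real.exp (δ * (1 + η ^ 2) ^ ρ)) := by
  have hr0 : (0:ℝ) ≤ r := by linarith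
  have hp0 : (0:ℝ) ≤ (r - 1) / 2 := by linarith
  have hs0 : (0:ℝ) ≤ (r - 1) / 2 + ρ := by linarith
  have hu0 : (0:ℝ) < 1 + c ^ 2 := by positivity
  set u := 1 + c ^ 2 with hu
  set E := Real.exp (δ * u ^ ρ) with hE
  have hE0 : (0:ℝ) < E := by rw [hE]; exact Real.exp_pos _
  have hup : (0:ℝ) ≤ u ^ ((r - 1) / 2) := Real.rpow_nonneg hu0.le _
  have hus : (0:ℝ) ≤ u ^ ((r - 1) / 2 + ρ) := Real.rpow_nonneg hu0.le _
  have hcu : |c| ≤ u ^ ((1:ℝ) / 2) := by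
    rw [hu, ← Real.sqrt_eq_rpow, ← Real.sqrt_sq_eq_abs]
    exact Real.sqrt_le_sqrt (by nlinarith)
  have hm1 : u ^ ((1:ℝ) / 2) * u ^ (r / 2 - 1) = u ^ ((r - 1) / 2) := by
    rw [← Real.rpow_add hu0]; congr 1; ring
  have hm2 : u ^ ((1:ℝ) / 2) * (u ^ (r / 2) * u ^ (ρ - 1)) = u ^ ((r - 1) / 2 + ρ) := by
    rw [← Real.rpow_add hu0, ← Real.rpow_add hu0]; congr 1; ring
  have hm3 : u ^ ((r - 1) / 2) * u ^ ρ = u ^ ((r - 1) / 2 + ρ) := (Real.rpow_add hu0 _ _).symm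
  have hG0 : 0 ≤ r * u ^ (r / 2 - 1) * E + 2 * ρ * δ * (u ^ (r / 2) * u ^ (ρ - 1)) * E := by
    have t1 : (0:ℝ) ≤ u ^ (r / 2 - 1) := Real.rpow_nonneg hu0.le _
    have t2 : (0:ℝ) ≤ u ^ (r / 2) * u ^ (ρ - 1) :=
      mul_nonneg (Real.rpow_nonneg hu0.le _) (Real.rpow_nonneg hu0.le _)
    have t3 : (0:ℝ) ≤ 2 * ρ * δ := mul_nonneg (by linarith) hδ
    have := mul_nonneg (mul_nonneg hr0 t1) hE0.le
    have := mul_nonneg (mul_nonneg t3 t2) hE0.le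
    linarith
  have hEb : E ≤ 1 + δ * u ^ ρ * E := by
    rw [hE]
    exact exp_le_one_add_mul (mul_nonneg hδ (Real.rpow_nonneg hu0.le _))
  -- step 1: bound by r * u^p + (r+1) * δ * u^s * E
  have step1 : |2 * c * (r / 2) * u ^ (r / 2 - 1) * E
      + u ^ (r / 2) * (E * (δ * (2 * c * ρ * u ^ (ρ - 1))))| ≤
      r * u ^ ((r - 1) / 2) + (r + 1) * δ * u ^ ((r - 1) / 2 + ρ) * E := by
    have hfac : 2 * c * (r / 2) * u ^ (r / 2 - 1) * E
        + u ^ (r / 2) * (E * (δ * (2 * c * ρ * u ^ (ρ - 1))))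
        = c * (r * u ^ (r / 2 - 1) * E + 2 * ρ * δ * (u ^ (r / 2) * u ^ (ρ - 1)) * E) := by
      ring
    have h0' : 0 ≤ δ * u ^ ((r - 1) / 2 + ρ) * E := mul_nonneg (mul_nonneg hδ hus) hE0.le
    have h5 : r * u ^ ((r - 1) / 2) * E ≤
        r * u ^ ((r - 1) / 2) + r * δ * u ^ ((r - 1) / 2 + ρ) * E := by
      calc r * u ^ ((r - 1) / 2) * E ≤ r * u ^ ((r - 1) / 2) * (1 + δ * u ^ ρ * E) :=
            mul_le_mul_of_nonneg_left hEb (mul_nonneg hr0 hup)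
        _ = r * u ^ ((r - 1) / 2) + r * δ * (u ^ ((r - 1) / 2) * u ^ ρ) * E := by ring
        _ = r * u ^ ((r - 1) / 2) + r * δ * u ^ ((r - 1) / 2 + ρ) * E := by rw [hm3]
    calc |2 * c * (r / 2) * u ^ (r / 2 - 1) * E
        + u ^ (r / 2) * (E * (δ * (2 * c * ρ * u ^ (ρ - 1))))|
        = |c| * (r * u ^ (r / 2 - 1) * E + 2 * ρ * δ * (u ^ (r / 2) * u ^ (ρ - 1)) * E) := by
          rw [hfac, abs_mul, abs_of_nonneg hG0]
      _ ≤ u ^ ((1:ℝ) / 2) * (r * u ^ (r / 2 - 1) * E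
            + 2 * ρ * δ * (u ^ (r / 2) * u ^ (ρ - 1)) * E) :=
          mul_le_mul_of_nonneg_right hcu hG0
      _ = r * (u ^ ((1:ℝ) / 2) * u ^ (r / 2 - 1)) * E
            + 2 * ρ * δ * (u ^ ((1:ℝ) / 2) * (u ^ (r / 2) * u ^ (ρ - 1))) * E := by ring
      _ = r * u ^ ((r - 1) / 2) * E + 2 * ρ * δ * u ^ ((r - 1) / 2 + ρ) * E := by
          rw [hm1, hm2]
      _ ≤ r * u ^ ((r - 1) / 2) * E + δ * u ^ ((r - 1) / 2 + ρ) * E := by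
          nlinarith [mul_le_mul_of_nonneg_right hρ2 h0']
      _ ≤ r * u ^ ((r - 1) / 2) + (r + 1) * δ * u ^ ((r - 1) / 2 + ρ) * E := by
          nlinarith [h5]
  -- Peetre splits
  have hcc : c - η + η = c := by ring
  have hAB : u ^ ((r - 1) / 2) ≤
      2 ^ (r - 1) * ((1 + D ^ 2) ^ ((r - 1) / 2) + (1 + η ^ 2) ^ ((r - 1) / 2)) := by
    have h := peetre_split hp0 (c - η) η
    rw [hcc] at h
    rw [show 2 * ((r - 1) / 2) = r - 1 from by ring] at h
    rw [hu]
    refine h.trans ?_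
    exact mul_le_mul_of_nonneg_left
      (add_le_add_left (mono_rpow hp0 hc) _) (by positivity)
  have hA2B2 : u ^ ((r - 1) / 2 + ρ) ≤
      2 ^ r * ((1 + D ^ 2) ^ ((r - 1) / 2 + ρ) + (1 + η ^ 2) ^ ((r - 1) / 2 + ρ)) := by
    have h := peetre_split hs0 (c - η) η
    rw [hcc] at h
    rw [hu]
    refine h.trans ?_
    have h2pow : (2:ℝ) ^ (2 * ((r - 1) / 2 + ρ)) ≤ 2 ^ r :=
      Real.rpow_le_rpow_of_exponent_le one_le_two (by linarith)
    refine mul_le_mul h2pow (add_le_add_left (mono_rpow hs0 hc) _) (by positivity)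
      (by positivity)
  have hEE : E ≤ Real.exp (δ * (1 + D ^ 2) ^ ρ) * Real.exp (δ * (1 + η ^ 2) ^ ρ) := by
    rw [hE, hu, ← Real.exp_add]
    apply Real.exp_le_exp.mpr
    have h := peetre_subadd hρ0.le hρ2 (c - η) η
    rw [hcc] at h
    have hm := mono_rpow (u := c - η) (v := D) hρ0.le hc
    calc δ * (1 + c ^ 2) ^ ρ ≤ δ * ((1 + D ^ 2) ^ ρ + (1 + η ^ 2) ^ ρ) := by
          apply mul_le_mul_of_nonneg_left _ hδ
          exact h.trans (add_le_add_left hm _)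
      _ = δ * (1 + D ^ 2) ^ ρ + δ * (1 + η ^ 2) ^ ρ := by ring
  -- final assembly
  have hfin1 : r * u ^ ((r - 1) / 2) ≤
      (r + 1) * (2 ^ r * ((1 + D ^ 2) ^ ((r - 1) / 2) + (1 + η ^ 2) ^ ((r - 1) / 2))) := by
    have h2 : (2:ℝ) ^ (r - 1) ≤ 2 ^ r :=
      Real.rpow_le_rpow_of_exponent_le one_le_two (by linarith)
    have hS1 : (0:ℝ) ≤ (1 + D ^ 2) ^ ((r - 1) / 2) + (1 + η ^ 2) ^ ((r - 1) / 2) := by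
      positivity
    calc r * u ^ ((r - 1) / 2)
        ≤ r * (2 ^ (r - 1) * ((1 + D ^ 2) ^ ((r - 1) / 2) + (1 + η ^ 2) ^ ((r - 1) / 2))) :=
          mul_le_mul_of_nonneg_left hAB hr0
      _ ≤ (r + 1) * (2 ^ r * ((1 + D ^ 2) ^ ((r - 1) / 2) + (1 + η ^ 2) ^ ((r - 1) / 2))) := by
          apply mul_le_mul (by linarith) (mul_le_mul_of_nonneg_right h2 hS1)
            (by positivity) (by linarith)
  have hfin2 : (r + 1) * δ * u ^ ((r - 1) / 2 + ρ) * E ≤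
      (r + 1) * δ *
        (2 ^ r * ((1 + D ^ 2) ^ ((r - 1) / 2 + ρ) + (1 + η ^ 2) ^ ((r - 1) / 2 + ρ)))
        * (Real.exp (δ * (1 + D ^ 2) ^ ρ) * Real.exp (δ * (1 + η ^ 2) ^ ρ)) := by
    have hprod := mul_le_mul hA2B2 hEE hE0.le (by positivity)
    calc (r + 1) * δ * u ^ ((r - 1) / 2 + ρ) * E
        = ((r + 1) * δ) * (u ^ ((r - 1) / 2 + ρ) * E) := by ring
      _ ≤ ((r + 1) * δ) *
            ((2 ^ r * ((1 + D ^ 2) ^ ((r - 1) / 2 + ρ) + (1 + η ^ 2) ^ ((r - 1) / 2 + ρ)))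
              * (Real.exp (δ * (1 + D ^ 2) ^ ρ) * Real.exp (δ * (1 + η ^ 2) ^ ρ))) :=
          mul_le_mul_of_nonneg_left hprod (mul_nonneg (by linarith) hδ)
      _ = _ := by ring
  refine step1.trans ?_
  nlinarith [hfin1, hfin2]

theorem gevrey_symbol_difference_estimate (r σ δ : ℝ) (hr : 1 ≤ r) (hσ : 1 ≤ σ) (hδ : 0 ≤ δ) :
    ∃ C : ℝ, 0 < C ∧ ∀ ξ η : ℝ,
      |(1 + ξ ^ 2) ^ (r / 2) * Real.exp (δ * (1 + ξ ^ 2) ^ (1 / (2 * σ))) -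
          (1 + η ^ 2) ^ (r / 2) * Real.exp (δ * (1 + η ^ 2) ^ (1 / (2 * σ)))| ≤
        C * |ξ - η| *
          ((1 + |ξ - η| ^ 2) ^ ((r - 1) / 2) + (1 + |η| ^ 2) ^ ((r - 1) / 2) +
            δ * ((1 + |ξ - η| ^ 2) ^ ((r - 1) / 2 + 1 / (2 * σ)) +
                  (1 + |η| ^ 2) ^ ((r - 1) / 2 + 1 / (2 * σ))) *
              Real.exp (δ * (1 + |ξ - η| ^ 2) ^ (1 / (2 * σ))) *
              Real.exp (δ * (1 + |η| ^ 2) ^ (1 / (2 * σ)))) := by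
  have hσ0 : (0:ℝ) < σ := by linarith
  have hρ0 : (0:ℝ) < 1 / (2 * σ) := by positivity
  have hρ2 : 2 * (1 / (2 * σ)) ≤ 1 := by
    rw [mul_one_div, div_le_one (by linarith)]; linarith
  refine ⟨(r + 1) * 2 ^ r,
    mul_pos (by linarith) (Real.rpow_pos_of_pos two_pos r), ?_⟩
  intro ξ η
  simp only [sq_abs]
  by_cases hne : ξ = η
  · subst hne; simp
  set ρ := 1 / (2 * σ) with hρdef
  obtain ⟨c, hcle, hceq⟩ : ∃ c, |c - η| ≤ |ξ - η| ∧
      (1 + ξ ^ 2) ^ (r / 2) * Real.exp (δ * (1 + ξ ^ 2) ^ ρ) -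
        (1 + η ^ 2) ^ (r / 2) * Real.exp (δ * (1 + η ^ 2) ^ ρ)
        = (2 * c * (r / 2) * (1 + c ^ 2) ^ (r / 2 - 1) * Real.exp (δ * (1 + c ^ 2) ^ ρ)
            + (1 + c ^ 2) ^ (r / 2) *
              (Real.exp (δ * (1 + c ^ 2) ^ ρ) * (δ * (2 * c * ρ * (1 + c ^ 2) ^ (ρ - 1)))))
          * (ξ - η) := by
    rcases lt_or_gt_of_ne hne with h | h
    · obtain ⟨c, hmem, heq⟩ := exists_hasDerivAt_eq_slope
        (fun y : ℝ => (1 + y ^ 2) ^ (r / 2) * Real.exp (δ * (1 + y ^ 2) ^ ρ))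
        (fun x : ℝ => 2 * x * (r / 2) * (1 + x ^ 2) ^ (r / 2 - 1) *
            Real.exp (δ * (1 + x ^ 2) ^ ρ)
            + (1 + x ^ 2) ^ (r / 2) *
              (Real.exp (δ * (1 + x ^ 2) ^ ρ) * (δ * (2 * x * ρ * (1 + x ^ 2) ^ (ρ - 1))))) h
        (fun x _ => (hasDerivAt_F r δ ρ x).continuousAt.continuousWithinAt)
        (fun x _ => hasDerivAt_F r δ ρ x)
      obtain ⟨h1, h2⟩ := hmem
      refine ⟨c, ?_, ?_⟩
      · rw [abs_of_nonpos (by linarith), abs_of_nonpos (by linarith)]; linarith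
      · rw [eq_div_iff (sub_pos.mpr h).ne'] at heq
        linear_combination heq
    · obtain ⟨c, hmem, heq⟩ := exists_hasDerivAt_eq_slope
        (fun y : ℝ => (1 + y ^ 2) ^ (r / 2) * Real.exp (δ * (1 + y ^ 2) ^ ρ))
        (fun x : ℝ => 2 * x * (r / 2) * (1 + x ^ 2) ^ (r / 2 - 1) *
            Real.exp (δ * (1 + x ^ 2) ^ ρ)
            + (1 + x ^ 2) ^ (r / 2) *
              (Real.exp (δ * (1 + x ^ 2) ^ ρ) * (δ * (2 * x * ρ * (1 + x ^ 2) ^ (ρ - 1))))) h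
        (fun x _ => (hasDerivAt_F r δ ρ x).continuousAt.continuousWithinAt)
        (fun x _ => hasDerivAt_F r δ ρ x)
      obtain ⟨h1, h2⟩ := hmem
      refine ⟨c, ?_, ?_⟩
      · rw [abs_of_nonneg (by linarith), abs_of_nonneg (by linarith)]; linarith
      · rw [eq_div_iff (sub_pos.mpr h).ne'] at heq
        linear_combination -heq
  rw [hceq, abs_mul]
  have hkey := key_bound (r := r) (δ := δ) (ρ := ρ) (D := ξ - η) (η := η) c hr hδ hρ0 hρ2
    (hcle.trans (le_of_eq rfl))
  calc |2 * c * (r / 2) * (1 + c ^ 2) ^ (r / 2 - 1) * Real.exp (δ * (1 + c ^ 2) ^ ρ)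
          + (1 + c ^ 2) ^ (r / 2) *
            (Real.exp (δ * (1 + c ^ 2) ^ ρ) * (δ * (2 * c * ρ * (1 + c ^ 2) ^ (ρ - 1))))|
        * |ξ - η|
      ≤ ((r + 1) * 2 ^ r * ((1 + (ξ - η) ^ 2) ^ ((r - 1) / 2) + (1 + η ^ 2) ^ ((r - 1) / 2)
          + δ * ((1 + (ξ - η) ^ 2) ^ ((r - 1) / 2 + ρ) + (1 + η ^ 2) ^ ((r - 1) / 2 + ρ))
            * Real.exp (δ * (1 + (ξ - η) ^ 2) ^ ρ) * Real.exp (δ * (1 + η ^ 2) ^ ρ)))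
          * |ξ - η| := mul_le_mul_of_nonneg_right hkey (abs_nonneg _)
    _ = (r + 1) * 2 ^ r * |ξ - η| *
          ((1 + (ξ - η) ^ 2) ^ ((r - 1) / 2) + (1 + η ^ 2) ^ ((r - 1) / 2)
          + δ * ((1 + (ξ - η) ^ 2) ^ ((r - 1) / 2 + ρ) + (1 + η ^ 2) ^ ((r - 1) / 2 + ρ))
            * Real.exp (δ * (1 + (ξ - η) ^ 2) ^ ρ) * Real.exp (δ * (1 + η ^ 2) ^ ρ)) := by
        ring
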